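/- Let H be a finite-dimensional Hopf algebra with right integral μ_R and right cointegral e_R, μ_R(e_R) = 1, e_L = S^{-1}(e_R), μ_L = μ_R ∘ S, and q = α(a) the pairing of the distinguished group-likes. Then S(e_R) = q e_L and μ_L(e_R) = q. -/

import Mathlib

open Coalgebra

universe uw

lemma aux_reindex {ι : Type*} {M : Type*} [AddCommMonoid M] (s : Finset ι) (F : ι → M) :
    ∑ i ∈ (Finset.univ : Finset (ULift.{uw} (Fin s.card))), F ↑(s.equivFin.symm i.down) =
    ∑ j ∈ s, F j := by
  rw [← Finset.sum_coe_sort s F, ← Equiv.sum_comp s.equivFin.symm (fun a => F ↑a)]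
  exact Equiv.sum_comp (Equiv.ulift.{uw}) (fun j => F ↑(s.equivFin.symm j))

section AuxHopf

variable {K H : Type*} [Field K] [Ring H] [HopfAlgebra K H]

lemma aux_sum_counit_left {u : H} {ι : Type*} (r : Coalgebra.Repr K u ι) :
    ∑ i ∈ r.index, Coalgebra.counit (R := K) (r.left i) • r.right i = u := by
  have h := congrArg (TensorProduct.lid K H) (Coalgebra.sum_counit_tmul_eq r)
  simp only [map_sum, TensorProduct.lid_tmul, one_smul] at h
  exact h

lemma aux_sum_counit_right {u : H} {ι : Type*} (r : Coalgebra.Repr K u ι) :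
    ∑ i ∈ r.index, Coalgebra.counit (R := K) (r.right i) • r.left i = u := by
  have h := congrArg (TensorProduct.rid K H) (Coalgebra.sum_tmul_counit_eq r)
  simp only [map_sum, TensorProduct.rid_tmul, one_smul] at h
  exact h

lemma aux_exp {ι κ : Type*} (y : H) (ry : Coalgebra.Repr K y ι)
    (a₁ : (i : ι) → Coalgebra.Repr K (ry.left i) κ) :
    (y ⊗ₜ[K] (1 : H)) = ∑ i ∈ ry.index, ∑ j ∈ (a₁ i).index,
      (a₁ i).left j ⊗ₜ[K] ((a₁ i).right j * HopfAlgebra.antipode (R := K) (ry.right i)) := by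
  classical
  set S := HopfAlgebra.antipode (R := K) (A := H)
  have coas := Coalgebra.sum_tmul_tmul_eq ry a₁ (fun i => Coalgebra.Repr.arbitrary K (ry.right i))
  have h := congrArg (LinearMap.lTensor H
    ((LinearMap.mul' K H) ∘ₗ (LinearMap.lTensor H S))) coas
  simp only [map_sum, LinearMap.lTensor_tmul, LinearMap.coe_comp, Function.comp_apply,
    LinearMap.mul'_apply] at h
  rw [h]; symm
  have key : ∀ i ∈ ry.index,
      ry.left i ⊗ₜ[K] (∑ j ∈ (Coalgebra.Repr.arbitrary K (ry.right i)).index,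
        (Coalgebra.Repr.arbitrary K (ry.right i)).left j *
          S ((Coalgebra.Repr.arbitrary K (ry.right i)).right j))
      = Coalgebra.counit (R := K) (ry.right i) • (ry.left i ⊗ₜ[K] (1 : H)) := by
    intro i _
    rw [HopfAlgebra.sum_mul_antipode_eq_smul]
    rw [TensorProduct.tmul_smul]
  calc ∑ i ∈ ry.index, ∑ j ∈ (Coalgebra.Repr.arbitrary K (ry.right i)).index,
        ry.left i ⊗ₜ[K] ((Coalgebra.Repr.arbitrary K (ry.right i)).left j *
          S ((Coalgebra.Repr.arbitrary K (ry.right i)).right j))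
      = ∑ i ∈ ry.index, Coalgebra.counit (R := K) (ry.right i) • (ry.left i ⊗ₜ[K] (1 : H)) := by
        refine Finset.sum_congr rfl fun i hi => ?_
        rw [← TensorProduct.tmul_sum]
        exact key i hi
    _ = (∑ i ∈ ry.index, Coalgebra.counit (R := K) (ry.right i) • ry.left i) ⊗ₜ[K] (1 : H) := by
        rw [TensorProduct.sum_tmul]
        exact Finset.sum_congr rfl fun i _ => by rw [TensorProduct.smul_tmul']
    _ = y ⊗ₜ[K] (1 : H) := by rw [aux_sum_counit_right]

lemma aux_key (eR : H) (heR : ∀ x : H, eR * x = Coalgebra.counit (R := K) x • eR) (y : H) :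
    Coalgebra.comul (R := K) eR * (y ⊗ₜ[K] (1 : H)) =
      Coalgebra.comul (R := K) eR * ((1 : H) ⊗ₜ[K] HopfAlgebra.antipode (R := K) y) := by
  classical
  set S := HopfAlgebra.antipode (R := K) (A := H) with hS
  set ry := Coalgebra.Repr.arbitrary K y with hry
  set a₁ : (i : H × H) → Coalgebra.Repr K (ry.left i) (H × H) :=
    fun i => Coalgebra.Repr.arbitrary K (ry.left i) with ha₁
  rw [aux_exp y ry a₁, Finset.mul_sum]
  calc ∑ i ∈ ry.index, Coalgebra.comul (R := K) eR *
        (∑ j ∈ (a₁ i).index, (a₁ i).left j ⊗ₜ[K] ((a₁ i).right j * S (ry.right i)))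
      = ∑ i ∈ ry.index, (Coalgebra.comul (R := K) eR *
          (∑ j ∈ (a₁ i).index, (a₁ i).left j ⊗ₜ[K] (a₁ i).right j)) *
            ((1 : H) ⊗ₜ[K] S (ry.right i)) := by
        refine Finset.sum_congr rfl fun i _ => ?_
        rw [mul_assoc, Finset.sum_mul]
        congr 1
        refine Finset.sum_congr rfl fun j _ => ?_
        rw [Algebra.TensorProduct.tmul_mul_tmul, mul_one]
    _ = ∑ i ∈ ry.index, Coalgebra.counit (R := K) (ry.left i) •
          (Coalgebra.comul (R := K) eR * ((1 : H) ⊗ₜ[K] S (ry.right i))) := by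
        refine Finset.sum_congr rfl fun i _ => ?_
        rw [(a₁ i).eq, ← Bialgebra.comul_mul, heR, map_smul, smul_mul_assoc]
    _ = Coalgebra.comul (R := K) eR *
          ((1 : H) ⊗ₜ[K] S (∑ i ∈ ry.index, Coalgebra.counit (R := K) (ry.left i) • ry.right i)) := by
        simp only [map_sum, map_smul, TensorProduct.tmul_sum, TensorProduct.tmul_smul,
          Finset.mul_sum, mul_smul_comm]
    _ = Coalgebra.comul (R := K) eR * ((1 : H) ⊗ₜ[K] S y) := by
        rw [aux_sum_counit_left ry]

end AuxHopf

/-- For a finite-dimensional Hopf algebra `H` with right integral `μR`, right cointegral `eR`,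
`μR eR = 1`, `eL = S⁻¹ eR`, `μL = μR ∘ S`, and `q = α a` the pairing of the distinguished
group-like elements, one has `S eR = q • eL` and `μL eR = q`. -/
theorem antipode_of_cointegral_eq_q_smul
    (K H : Type*) [Field K] [Ring H] [HopfAlgebra K H] [FiniteDimensional K H]
    (Sinv : H →ₗ[K] H)
    (h1 : Sinv ∘ₗ HopfAlgebra.antipode (R := K) (A := H) = LinearMap.id)
    (h2 : HopfAlgebra.antipode (R := K) (A := H) ∘ₗ Sinv = LinearMap.id)
    (μR : H →ₗ[K] K) (eR : H)
    (hμR : ∀ (x : H) (ι : Type*) (r : Coalgebra.Repr K x ι),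
      ∑ i ∈ r.index, μR (r.left i) • r.right i = μR x • (1 : H))
    (heR : ∀ x : H, eR * x = Coalgebra.counit (R := K) x • eR)
    (hnorm : μR eR = 1) :
    ∀ (ι' : Type*) (re : Coalgebra.Repr K eR ι'),
      HopfAlgebra.antipode (R := K) (A := H) eR =
          μR ((∑ j ∈ re.index, μR (re.right j) • re.left j) * eR) • Sinv eR ∧
        μR (HopfAlgebra.antipode (R := K) (A := H) eR) =
          μR ((∑ j ∈ re.index, μR (re.right j) • re.left j) * eR) := by
  intro ι' re
  classical
  have hre : ∑ j ∈ re.index, μR (re.left j) • re.right j = μR eR • (1 : H) := by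
    rw [← aux_reindex re.index (fun j => μR (re.left j) • re.right j)]
    exact hμR eR _ ⟨(Finset.univ : Finset (ULift (Fin re.index.card))),
      fun i => re.left ↑(re.index.equivFin.symm i.down),
      fun i => re.right ↑(re.index.equivFin.symm i.down),
      by rw [aux_reindex re.index (fun j => re.left j ⊗ₜ[K] re.right j)]; exact re.eq⟩
  -- the contraction map  s ⊗ t ↦ μR s • t
  set Clin : TensorProduct K H H →ₗ[K] H :=
    (TensorProduct.lid K H).toLinearMap ∘ₗ μR.rTensor H with hClin
  have Clin_tmul : ∀ s t : H, Clin (s ⊗ₜ[K] t) = μR s • t := by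
    intro s t
    simp [hClin]
  have Cleft' : ∀ x : H, Clin (Coalgebra.comul (R := K) eR * (x ⊗ₜ[K] (1 : H))) =
      ∑ j ∈ re.index, μR (re.left j * x) • re.right j := by
    intro x
    rw [← re.eq, Finset.sum_mul, map_sum]
    refine Finset.sum_congr rfl fun j _ => ?_
    rw [Algebra.TensorProduct.tmul_mul_tmul, mul_one, Clin_tmul]
  have Cright' : ∀ u : H, Clin (Coalgebra.comul (R := K) eR * ((1 : H) ⊗ₜ[K] u)) = u := by
    intro u
    rw [← re.eq, Finset.sum_mul, map_sum]
    calc ∑ j ∈ re.index, Clin ((re.left j ⊗ₜ[K] re.right j) * ((1 : H) ⊗ₜ[K] u))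
        = ∑ j ∈ re.index, (μR (re.left j) • re.right j) * u := by
          refine Finset.sum_congr rfl fun j _ => ?_
          rw [Algebra.TensorProduct.tmul_mul_tmul, mul_one, Clin_tmul, smul_mul_assoc]
      _ = (∑ j ∈ re.index, μR (re.left j) • re.right j) * u := by rw [Finset.sum_mul]
      _ = (μR eR • (1 : H)) * u := by rw [hre]
      _ = u := by rw [hnorm, one_smul, one_mul]
  -- the antipode formula  S x = ∑ μR (eR₁ x) • eR₂
  have TS : ∀ x : H, HopfAlgebra.antipode (R := K) (A := H) x =
      ∑ j ∈ re.index, μR (re.left j * x) • re.right j := by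
    intro x
    have h := congrArg Clin (aux_key eR heR x)
    rw [Cleft' x, Cright'] at h
    exact h.symm
  -- anti-multiplicativity of the antipode
  have antimul : ∀ x y : H, HopfAlgebra.antipode (R := K) (A := H) (x * y) =
      HopfAlgebra.antipode (R := K) (A := H) y * HopfAlgebra.antipode (R := K) (A := H) x := by
    intro x y
    have e1 : Coalgebra.comul (R := K) eR * ((x * y) ⊗ₜ[K] (1 : H)) =
        Coalgebra.comul (R := K) eR * ((1 : H) ⊗ₜ[K]
          (HopfAlgebra.antipode (R := K) (A := H) y * HopfAlgebra.antipode (R := K) (A := H) x)) := by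
      calc Coalgebra.comul (R := K) eR * ((x * y) ⊗ₜ[K] (1 : H))
          = Coalgebra.comul (R := K) eR * ((x ⊗ₜ[K] (1 : H)) * (y ⊗ₜ[K] (1 : H))) := by
            rw [Algebra.TensorProduct.tmul_mul_tmul, mul_one]
        _ = (Coalgebra.comul (R := K) eR * (x ⊗ₜ[K] (1 : H))) * (y ⊗ₜ[K] (1 : H)) := by
            rw [mul_assoc]
        _ = (Coalgebra.comul (R := K) eR *
              ((1 : H) ⊗ₜ[K] HopfAlgebra.antipode (R := K) x)) * (y ⊗ₜ[K] (1 : H)) := by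
            rw [aux_key eR heR x]
        _ = Coalgebra.comul (R := K) eR *
              ((y ⊗ₜ[K] (1 : H)) * ((1 : H) ⊗ₜ[K] HopfAlgebra.antipode (R := K) x)) := by
            rw [mul_assoc, Algebra.TensorProduct.tmul_mul_tmul,
              Algebra.TensorProduct.tmul_mul_tmul, one_mul, mul_one, mul_one, one_mul]
        _ = (Coalgebra.comul (R := K) eR * (y ⊗ₜ[K] (1 : H))) *
              ((1 : H) ⊗ₜ[K] HopfAlgebra.antipode (R := K) x) := by
            rw [mul_assoc]
        _ = (Coalgebra.comul (R := K) eR * ((1 : H) ⊗ₜ[K] HopfAlgebra.antipode (R := K) y)) *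
              ((1 : H) ⊗ₜ[K] HopfAlgebra.antipode (R := K) x) := by
            rw [aux_key eR heR y]
        _ = Coalgebra.comul (R := K) eR * ((1 : H) ⊗ₜ[K]
              (HopfAlgebra.antipode (R := K) (A := H) y *
                HopfAlgebra.antipode (R := K) (A := H) x)) := by
            rw [mul_assoc, Algebra.TensorProduct.tmul_mul_tmul, one_mul]
    have h := congrArg Clin e1
    rw [Cright'] at h
    rw [TS (x * y), ← Cleft' (x * y)]
    exact h
  -- counit of antipode
  have epsS : ∀ u : H, Coalgebra.counit (R := K) (HopfAlgebra.antipode (R := K) (A := H) u) =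
      Coalgebra.counit (R := K) u := by
    intro u
    set r := Coalgebra.Repr.arbitrary K u with hr
    have hs : ∑ i ∈ r.index, Coalgebra.counit (R := K)
          (HopfAlgebra.antipode (R := K) (A := H) (r.left i)) *
          Coalgebra.counit (R := K) (r.right i) = Coalgebra.counit (R := K) u := by
      have h := congrArg (Coalgebra.counit (R := K) (A := H))
        (HopfAlgebra.sum_antipode_mul_eq_algebraMap_counit (R := K) r)
      simp only [map_sum, Bialgebra.counit_mul, Bialgebra.counit_algebraMap] at h
      exact h
    have hu := aux_sum_counit_right r
    conv_lhs => rw [← hu]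
    rw [map_sum, map_sum]
    calc ∑ i ∈ r.index, Coalgebra.counit (R := K)
          (HopfAlgebra.antipode (R := K) (A := H)
            (Coalgebra.counit (R := K) (r.right i) • r.left i))
        = ∑ i ∈ r.index, Coalgebra.counit (R := K)
            (HopfAlgebra.antipode (R := K) (A := H) (r.left i)) *
            Coalgebra.counit (R := K) (r.right i) := by
          refine Finset.sum_congr rfl fun i _ => ?_
          rw [map_smul, map_smul, smul_eq_mul, mul_comm]
      _ = Coalgebra.counit (R := K) u := hs
  -- S eR is a left cointegral
  have leftco : ∀ x : H, x * HopfAlgebra.antipode (R := K) (A := H) eR =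
      Coalgebra.counit (R := K) x • HopfAlgebra.antipode (R := K) (A := H) eR := by
    intro x
    have hx : HopfAlgebra.antipode (R := K) (A := H) (Sinv x) = x := LinearMap.congr_fun h2 x
    calc x * HopfAlgebra.antipode (R := K) (A := H) eR
        = HopfAlgebra.antipode (R := K) (A := H) (Sinv x) *
            HopfAlgebra.antipode (R := K) (A := H) eR := by rw [hx]
      _ = HopfAlgebra.antipode (R := K) (A := H) (eR * Sinv x) := (antimul eR (Sinv x)).symm
      _ = HopfAlgebra.antipode (R := K) (A := H) (Coalgebra.counit (R := K) (Sinv x) • eR) := by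
          rw [heR]
      _ = Coalgebra.counit (R := K) (Sinv x) • HopfAlgebra.antipode (R := K) (A := H) eR := by
          rw [map_smul]
      _ = Coalgebra.counit (R := K) x • HopfAlgebra.antipode (R := K) (A := H) eR := by
          rw [← epsS (Sinv x), hx]
  -- value of q
  have hq : μR ((∑ j ∈ re.index, μR (re.right j) • re.left j) * eR) =
      ∑ j ∈ re.index, μR (re.left j * eR) * μR (re.right j) := by
    rw [Finset.sum_mul, map_sum]
    refine Finset.sum_congr rfl fun j _ => ?_
    rw [smul_mul_assoc, map_smul, smul_eq_mul, mul_comm]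
  -- goal 2
  have g2 : μR (HopfAlgebra.antipode (R := K) (A := H) eR) =
      μR ((∑ j ∈ re.index, μR (re.right j) • re.left j) * eR) := by
    rw [TS eR, map_sum, hq]
    refine Finset.sum_congr rfl fun j _ => ?_
    rw [map_smul, smul_eq_mul]
  -- S (S eR) = μR (S eR) • eR
  have hSS : HopfAlgebra.antipode (R := K) (A := H) (HopfAlgebra.antipode (R := K) (A := H) eR) =
      μR (HopfAlgebra.antipode (R := K) (A := H) eR) • eR := by
    rw [TS (HopfAlgebra.antipode (R := K) (A := H) eR)]
    calc ∑ j ∈ re.index, μR (re.left j * HopfAlgebra.antipode (R := K) (A := H) eR) • re.right j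
        = ∑ j ∈ re.index, Coalgebra.counit (R := K) (re.left j) •
            (μR (HopfAlgebra.antipode (R := K) (A := H) eR) • re.right j) := by
          refine Finset.sum_congr rfl fun j _ => ?_
          rw [leftco (re.left j), map_smul, smul_eq_mul, mul_smul]
      _ = μR (HopfAlgebra.antipode (R := K) (A := H) eR) •
            ∑ j ∈ re.index, Coalgebra.counit (R := K) (re.left j) • re.right j := by
          rw [Finset.smul_sum]
          exact Finset.sum_congr rfl fun j _ => smul_comm _ _ _
      _ = μR (HopfAlgebra.antipode (R := K) (A := H) eR) • eR := by
          rw [aux_sum_counit_left re]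
  -- goal 1
  have g1 : HopfAlgebra.antipode (R := K) (A := H) eR =
      μR ((∑ j ∈ re.index, μR (re.right j) • re.left j) * eR) • Sinv eR := by
    have h := congrArg Sinv hSS
    rw [map_smul] at h
    have hL : Sinv (HopfAlgebra.antipode (R := K) (A := H)
        (HopfAlgebra.antipode (R := K) (A := H) eR)) =
        HopfAlgebra.antipode (R := K) (A := H) eR :=
      LinearMap.congr_fun h1 (HopfAlgebra.antipode (R := K) (A := H) eR)
    rw [hL] at h
    rw [g2] at h
    exact h
  exact ⟨g1, g2⟩
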